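/- The distribution function F : [0,1] → [0,1] defined by F(x) = μ([0,x]) (with F(1) := 1) is continuous and strictly increasing on [0,1]. -/

import Mathlib

open MeasureTheory Filter Topology Real
open scoped ENNReal

noncomputable section

/-- Stern's diatomic sequence: s(0)=0, s(1)=1, s(2n)=s(n), s(2n+1)=s(n)+s(n+1). -/
def stern : ℕ → ℕ
  | 0 => 0
  | 1 => 1
  | n + 2 =>
    if h : n % 2 = 0 then stern (n / 2 + 1)
    else stern (n / 2 + 1) + stern (n / 2 + 2)
decreasing_by all_goals omega


lemma stern_zero : stern 0 = 0 := by simp [stern]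
lemma stern_one : stern 1 = 1 := by simp [stern]

lemma stern_two_mul (x : ℕ) : stern (2 * x) = stern x := by
  cases x with
  | zero => rfl
  | succ x =>
    have h2 : 2 * (x + 1) = (2 * x) + 2 := by ring
    rw [h2, stern, dif_pos (by omega : (2 * x) % 2 = 0)]
    congr 1
    omega

lemma stern_two_mul_add_one (x : ℕ) : stern (2 * x + 1) = stern x + stern (x + 1) := by
  cases x with
  | zero => simp [stern_zero, stern_one]
  | succ x =>
    have h2 : 2 * (x + 1) + 1 = (2 * x + 1) + 2 := by ring
    rw [h2, stern, dif_neg (by omega : ¬ (2 * x + 1) % 2 = 0)]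
    have : (2 * x + 1) / 2 = x := by omega
    rw [this]

lemma stern_pos {x : ℕ} (hx : 1 ≤ x) : 1 ≤ stern x := by
  induction x using Nat.strong_induction_on with
  | _ x ih =>
    match x, hx with
    | 1, _ => simp [stern_one]
    | x + 2, _ =>
      rcases Nat.even_or_odd (x + 2) with ⟨y, hy⟩ | ⟨y, hy⟩
      · have h : x + 2 = 2 * y := by omega
        rw [h, stern_two_mul]
        exact ih y (by omega) (by omega)
      · have h : x + 2 = 2 * y + 1 := by omega
        rw [h, stern_two_mul_add_one]
        have := ih (y + 1) (by omega) (by omega)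
        omega

lemma stern_le {x : ℕ} (hx : 1 ≤ x) : stern x ≤ x := by
  induction x using Nat.strong_induction_on with
  | _ x ih =>
    match x, hx with
    | 1, _ => simp [stern_one]
    | x + 2, _ =>
      rcases Nat.even_or_odd (x + 2) with ⟨y, hy⟩ | ⟨y, hy⟩
      · have h : x + 2 = 2 * y := by omega
        rw [h, stern_two_mul]
        have := ih y (by omega) (by omega)
        omega
      · have h : x + 2 = 2 * y + 1 := by omega
        rw [h, stern_two_mul_add_one]
        have h1 := ih y (by omega) (by omega)
        have h2 := ih (y + 1) (by omega) (by omega)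
        omega

def sumT (A t : ℕ) : ℕ := ∑ j ∈ Finset.range (2 ^ t), stern (2 ^ t * A + j)

lemma sumT_zero (A : ℕ) : sumT A 0 = stern A := by simp [sumT]

lemma stern_pow_mul (t A : ℕ) : stern (2 ^ t * A) = stern A := by
  induction t with
  | zero => simp
  | succ t ih => rw [pow_succ, mul_comm (2 ^ t) 2, mul_assoc, stern_two_mul, ih]

lemma sum_range_two_mul (N : ℕ) (f : ℕ → ℕ) :
    ∑ j ∈ Finset.range (2 * N), f j = ∑ i ∈ Finset.range N, (f (2 * i) + f (2 * i + 1)) := by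
  induction N with
  | zero => simp
  | succ N ih =>
    have : 2 * (N + 1) = (2 * N + 1) + 1 := by ring
    rw [this, Finset.sum_range_succ, Finset.sum_range_succ, ih, Finset.sum_range_succ]
    omega

lemma sumT_succ (A t : ℕ) : sumT A (t + 1) + stern A = 3 * sumT A t + stern (A + 1) := by
  set B := 2 ^ t * A with hB
  have key : sumT A (t + 1)
      = ∑ i ∈ Finset.range (2 ^ t), (stern (B + i) + (stern (B + i) + stern (B + i + 1))) := by
    rw [sumT, pow_succ, mul_comm (2 ^ t) 2, mul_assoc, mul_comm 2 (2 ^ t)]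
    rw [show 2 ^ t * 2 = 2 * 2 ^ t from by ring]
    rw [sum_range_two_mul]
    refine Finset.sum_congr rfl fun i _ => ?_
    have e1 : 2 * B + 2 * i = 2 * (B + i) := by ring
    have e2 : 2 * B + (2 * i + 1) = 2 * (B + i) + 1 := by ring
    rw [show 2 * (2 ^ t * A) + 2 * i = 2 * (B + i) from by rw [hB]; ring,
        show 2 * (2 ^ t * A) + (2 * i + 1) = 2 * (B + i) + 1 from by rw [hB]; ring,
        stern_two_mul, stern_two_mul_add_one]
  have shift : ∑ i ∈ Finset.range (2 ^ t), stern (B + i + 1) + stern B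
      = ∑ i ∈ Finset.range (2 ^ t), stern (B + i) + stern (B + 2 ^ t) := by
    have h1 := Finset.sum_range_succ (fun i => stern (B + i)) (2 ^ t)
    have h2 := Finset.sum_range_succ' (fun i => stern (B + i)) (2 ^ t)
    simp only [Nat.add_zero, ← Nat.add_assoc] at h2
    omega
  have hBA : stern B = stern A := stern_pow_mul t A
  have hBA' : stern (B + 2 ^ t) = stern (A + 1) := by
    rw [show B + 2 ^ t = 2 ^ t * (A + 1) from by rw [hB]; ring, stern_pow_mul]
  have hsum : sumT A t = ∑ i ∈ Finset.range (2 ^ t), stern (B + i) := rfl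
  rw [key, Finset.sum_add_distrib, Finset.sum_add_distrib]
  rw [hsum]
  omega

lemma sumT_formula (A t : ℕ) :
    2 * sumT A t + stern (A + 1) = 3 ^ t * (stern A + stern (A + 1)) + stern A := by
  induction t with
  | zero => rw [sumT_zero]; ring
  | succ t ih =>
    have h := sumT_succ A t
    have h3 : (3 : ℕ) ^ (t + 1) * (stern A + stern (A + 1))
        = 3 * (3 ^ t * (stern A + stern (A + 1))) := by ring
    rw [h3]
    omega

lemma sumT_ge {A : ℕ} (hA : 1 ≤ A) (t : ℕ) : 3 ^ t + 1 ≤ 2 * sumT A t := by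
  have h := sumT_formula A t
  have h1 := stern_pos hA
  have h2 := stern_pos (show 1 ≤ A + 1 by omega)
  have hp : 1 ≤ 3 ^ t := Nat.one_le_pow _ _ (by norm_num)
  nlinarith [h, h1, h2, hp]

lemma sumT_le {A : ℕ} (hA : 1 ≤ A) (t : ℕ) : sumT A t ≤ 2 * A * 3 ^ t := by
  have h := sumT_formula A t
  have h1 := stern_le hA
  have h2 := stern_le (show 1 ≤ A + 1 by omega)
  have h2' := stern_pos (show 1 ≤ A + 1 by omega)
  have hp : 1 ≤ 3 ^ t := Nat.one_le_pow _ _ (by norm_num)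
  nlinarith [h, h1, h2, hp, h2', hA]

lemma coe_circle_eq_iff (u v : ℝ) : ((u : UnitAddCircle) = v) ↔ ∃ n : ℤ, n • (1:ℝ) = u - v := by
  rw [← sub_eq_zero, ← AddCircle.coe_sub, AddCircle.coe_eq_zero_iff]

lemma coe_circle_inj {u v : ℝ} (h : |u - v| < 1) : ((u : UnitAddCircle) = v) ↔ u = v := by
  rw [coe_circle_eq_iff]
  constructor
  · rintro ⟨n, hn⟩
    simp only [zsmul_eq_mul, mul_one] at hn
    have h1 : |(n : ℝ)| < 1 := by rw [hn]; exact h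
    have h2 : (-1 : ℝ) < (n : ℝ) ∧ (n : ℝ) < 1 := abs_lt.mp h1
    have h3 : n = 0 := by
      have ha : (-1 : ℤ) < n := by exact_mod_cast h2.1
      have hb : n < 1 := by exact_mod_cast h2.2
      omega
    rw [h3] at hn
    simp at hn
    linarith
  · rintro rfl
    exact ⟨0, by simp⟩

lemma smul_sum_apply (S : Set UnitAddCircle) (hS : MeasurableSet S) (c : ℝ≥0∞) (w : ℕ → ℝ≥0∞) (x : ℕ → UnitAddCircle) (N : ℕ) :
    (c • ∑ m ∈ Finset.range N, w m • Measure.dirac (x m)) S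
      = c * ∑ m ∈ Finset.range N, w m * S.indicator 1 (x m) := by
  rw [Measure.smul_apply, Measure.finset_sum_apply]
  simp_rw [Measure.smul_apply, Measure.dirac_apply' _ hS, smul_eq_mul]

example (a b : ℝ) : IsOpen ((fun y : ℝ => (y : UnitAddCircle)) '' Set.Ioo a b) :=
  QuotientAddGroup.isOpenMap_coe _ isOpen_Ioo

example (a b : ℝ) : IsClosed ((fun y : ℝ => (y : UnitAddCircle)) '' Set.Icc a b) :=
  (isCompact_Icc.image (AddCircle.continuous_mk' 1)).isClosed

/-- The probability measure μ_n = 3^{-n} ∑_{m=0}^{2^n-1} s(2^n+m) δ_{m/2^n} on the 1-torus. -/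
def sternMeasure (n : ℕ) : Measure UnitAddCircle :=
  ((3 : ℝ≥0∞) ^ n)⁻¹ • ∑ m ∈ Finset.range (2 ^ n),
    (stern (2 ^ n + m) : ℝ≥0∞) • Measure.dirac ((m / 2 ^ n : ℝ) : UnitAddCircle)
lemma sternMeasure_apply (k : ℕ) (S : Set UnitAddCircle) (hS : MeasurableSet S) :
    sternMeasure k S = ((3 : ℝ≥0∞) ^ k)⁻¹
      * ∑ m ∈ Finset.range (2 ^ k),
          (stern (2 ^ k + m) : ℝ≥0∞) * S.indicator 1 ((m / 2 ^ k : ℝ) : UnitAddCircle) :=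
  smul_sum_apply S hS _ _ _ _

lemma sum_stern_eq (k : ℕ) : ∑ m ∈ Finset.range (2 ^ k), stern (2 ^ k + m) = 3 ^ k := by
  have h := sumT_formula 1 k
  have h2 : stern 2 = 1 := by rw [show (2:ℕ) = 2 * 1 from rfl, stern_two_mul, stern_one]
  rw [stern_one] at h
  have h3 : sumT 1 k = ∑ m ∈ Finset.range (2 ^ k), stern (2 ^ k + m) := by
    unfold sumT
    refine Finset.sum_congr rfl fun j _ => by rw [mul_one]
  have h4 : (1:ℕ) + 1 = 2 := rfl
  rw [h4, h2] at h
  omega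

instance sternMeasure_prob (k : ℕ) : IsProbabilityMeasure (sternMeasure k) := by
  constructor
  rw [sternMeasure_apply k Set.univ MeasurableSet.univ]
  simp only [Set.indicator_univ, Pi.one_apply, mul_one]
  have : ∑ m ∈ Finset.range (2 ^ k), ((stern (2 ^ k + m) : ℝ≥0∞))
      = ((3 ^ k : ℕ) : ℝ≥0∞) := by
    rw [← Nat.cast_sum, sum_stern_eq]
  rw [this]
  push_cast
  rw [ENNReal.inv_mul_cancel (pow_ne_zero _ (by norm_num)) (ENNReal.pow_ne_top (by norm_num))]

/-- Aligned window sums. -/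
lemma sum_Ico_window (k n m : ℕ) (hk : n ≤ k) :
    ∑ j ∈ Finset.Ico (m * 2 ^ (k - n)) ((m + 1) * 2 ^ (k - n)), stern (2 ^ k + j)
      = sumT (2 ^ n + m) (k - n) := by
  set t := k - n with ht
  have hW : 2 ^ t * 2 ^ n = 2 ^ k := by rw [← pow_add]; congr 1; omega
  rw [Finset.sum_Ico_eq_sum_range]
  have hlen : (m + 1) * 2 ^ t - m * 2 ^ t = 2 ^ t := by rw [add_mul, one_mul, Nat.add_sub_cancel_left]
  rw [hlen, sumT]
  refine Finset.sum_congr rfl fun j _ => ?_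
  congr 1
  have : 2 ^ t * (2 ^ n + m) = 2 ^ k + m * 2 ^ t := by rw [mul_add, hW]; ring
  rw [this]
  ring

lemma sum_Ico_stern (n m k : ℕ) (hk : n ≤ k) :
    stern (2 ^ n + m)
      + ∑ j ∈ Finset.Ico (m * 2 ^ (k - n) + 1) ((m + 1) * 2 ^ (k - n)), stern (2 ^ k + j)
      = sumT (2 ^ n + m) (k - n) := by
  have h1 := sum_Ico_window k n m hk
  have hpos : m * 2 ^ (k - n) < (m + 1) * 2 ^ (k - n) := by
    have : 0 < 2 ^ (k - n) := Nat.pow_pos (by norm_num)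
    nlinarith
  rw [Finset.sum_eq_sum_Ico_succ_bot hpos] at h1
  have hst : stern (2 ^ k + m * 2 ^ (k - n)) = stern (2 ^ n + m) := by
    have hW : 2 ^ (k - n) * 2 ^ n = 2 ^ k := by rw [← pow_add]; congr 1; omega
    have : 2 ^ k + m * 2 ^ (k - n) = 2 ^ (k - n) * (2 ^ n + m) := by
      rw [mul_add, hW]; ring
    rw [this, stern_pow_mul]
  rw [hst] at h1
  omega

lemma interior_sum_ge (n m k : ℕ) (hk : 2 * n + 3 ≤ k) (hm : m + 1 ≤ 2 ^ n) :
    3 ^ (k - n) ≤ 4 * ∑ j ∈ Finset.Ico (m * 2 ^ (k - n) + 1) ((m + 1) * 2 ^ (k - n)),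
      stern (2 ^ k + j) := by
  have hkn : n ≤ k := by omega
  have h1 := sum_Ico_stern n m k hkn
  have hp : 1 ≤ 2 ^ n := Nat.one_le_two_pow
  have h2 := sumT_ge (show 1 ≤ 2 ^ n + m by omega) (k - n)
  have h3 : stern (2 ^ n + m) ≤ 2 ^ n + m := stern_le (by omega)
  have h4 : 2 ^ n + m ≤ 2 ^ (n + 1) := by
    have : (2:ℕ) ^ (n + 1) = 2 ^ n + 2 ^ n := by ring
    omega
  have h5 : 2 ^ (n + 3) ≤ 3 ^ (k - n) := by
    calc (2:ℕ) ^ (n + 3) ≤ 3 ^ (n + 3) := Nat.pow_le_pow_left (by norm_num) _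
    _ ≤ 3 ^ (k - n) := Nat.pow_le_pow_right (by norm_num) (by omega)
  have h6 : (2:ℕ) ^ (n + 3) = 4 * 2 ^ (n + 1) := by ring
  omega

lemma sum_two_windows_le (k nn m0 : ℕ) (hk : nn ≤ k) (hm0 : m0 ≤ 2 ^ (nn + 2)) :
    ∑ j ∈ Finset.Ico (m0 * 2 ^ (k - nn)) ((m0 + 2) * 2 ^ (k - nn)), stern (2 ^ k + j)
      ≤ 2 ^ (nn + 5) * 3 ^ (k - nn) := by
  have hsplit := Finset.sum_Ico_consecutive (fun j => stern (2 ^ k + j))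
    (show m0 * 2 ^ (k - nn) ≤ (m0 + 1) * 2 ^ (k - nn) from by nlinarith [(show 0 < 2 ^ (k - nn) from Nat.pow_pos (by norm_num))])
    (show (m0 + 1) * 2 ^ (k - nn) ≤ (m0 + 2) * 2 ^ (k - nn) from by nlinarith [(show 0 < 2 ^ (k - nn) from Nat.pow_pos (by norm_num))])
  rw [← hsplit, sum_Ico_window k nn m0 hk, sum_Ico_window k nn (m0 + 1) hk]
  have hp : 1 ≤ 2 ^ nn := Nat.one_le_two_pow
  have b1 : sumT (2 ^ nn + m0) (k - nn) ≤ 2 * (2 ^ nn + m0) * 3 ^ (k - nn) :=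
    sumT_le (by omega) _
  have b2 : sumT (2 ^ nn + m0 + 1) (k - nn) ≤ 2 * (2 ^ nn + m0 + 1) * 3 ^ (k - nn) :=
    sumT_le (by omega) _
  have hA : 2 * (2 ^ nn + m0) ≤ 2 ^ (nn + 4) := by
    have : (2:ℕ) ^ (nn + 4) = 2 * 2 ^ nn + 2 * 2 ^ (nn + 2) + 6 * 2 ^ nn := by ring
    omega
  have hA1 : 2 * (2 ^ nn + m0 + 1) ≤ 2 ^ (nn + 4) := by
    have : (2:ℕ) ^ (nn + 4) = 2 * 2 ^ nn + 2 * 2 ^ (nn + 2) + 6 * 2 ^ nn := by ring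
    omega
  have hB : (2:ℕ) ^ (nn + 5) = 2 ^ (nn + 4) + 2 ^ (nn + 4) := by ring
  calc sumT (2 ^ nn + m0) (k - nn) + sumT (2 ^ nn + m0 + 1) (k - nn)
      ≤ 2 * (2 ^ nn + m0) * 3 ^ (k - nn) + 2 * (2 ^ nn + m0 + 1) * 3 ^ (k - nn) := by omega
    _ ≤ 2 ^ (nn + 4) * 3 ^ (k - nn) + 2 ^ (nn + 4) * 3 ^ (k - nn) := by
        have := Nat.mul_le_mul_right (3 ^ (k - nn)) hA
        have := Nat.mul_le_mul_right (3 ^ (k - nn)) hA1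
        omega
    _ = 2 ^ (nn + 5) * 3 ^ (k - nn) := by ring
lemma inv_pow3_mul (n t : ℕ) : ((3:ℝ≥0∞) ^ (n + t))⁻¹ * 3 ^ t = ((3:ℝ≥0∞) ^ n)⁻¹ := by
  rw [pow_add, ENNReal.mul_inv (Or.inl (pow_ne_zero _ (by norm_num)))
    (Or.inl (ENNReal.pow_ne_top (by norm_num))), mul_assoc,
    ENNReal.inv_mul_cancel (pow_ne_zero _ (by norm_num)) (ENNReal.pow_ne_top (by norm_num)),
    mul_one]

lemma sternMeasure_closed_ge (n m k : ℕ) (hm : m + 1 ≤ 2 ^ n) (hk : 2 * n + 3 ≤ k) :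
    ((4:ℝ≥0∞) * 3 ^ n)⁻¹ ≤ sternMeasure k
      ((fun y : ℝ => (y : UnitAddCircle)) '' Set.Icc ((m : ℝ) / 2 ^ n) (((m : ℝ) + 1) / 2 ^ n)) := by
  set C := (fun y : ℝ => (y : UnitAddCircle)) '' Set.Icc ((m : ℝ) / 2 ^ n) (((m : ℝ) + 1) / 2 ^ n)
    with hCdef
  have hC : MeasurableSet C :=
    ((isCompact_Icc.image (AddCircle.continuous_mk' 1)).isClosed).measurableSet
  rw [sternMeasure_apply _ _ hC]
  set t := k - n with ht
  set W := 2 ^ t with hW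
  have hkn : n ≤ k := by omega
  have hWpos : 0 < W := Nat.pow_pos (by norm_num)
  have h2k : (2:ℕ) ^ n * W = 2 ^ k := by rw [hW, ← pow_add]; congr 1; omega
  have h2kr : (2:ℝ) ^ n * (W:ℕ) = 2 ^ k := by exact_mod_cast congrArg (Nat.cast : ℕ → ℝ) h2k
  -- the interior dyadics
  have hsub : Finset.Ico (m * W + 1) ((m + 1) * W) ⊆ Finset.range (2 ^ k) := by
    intro j hj
    rw [Finset.mem_Ico] at hj
    rw [Finset.mem_range]
    have : (m + 1) * W ≤ 2 ^ n * W := Nat.mul_le_mul_right _ hm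
    omega
  have hind : ∀ j ∈ Finset.Ico (m * W + 1) ((m + 1) * W),
      C.indicator (1 : UnitAddCircle → ℝ≥0∞) (((j:ℝ) / 2 ^ k : ℝ) : UnitAddCircle) = 1 := by
    intro j hj
    rw [Finset.mem_Ico] at hj
    apply Set.indicator_of_mem
    refine ⟨(j:ℝ) / 2 ^ k, ⟨?_, ?_⟩, rfl⟩
    · rw [div_le_div_iff₀ (by positivity) (by positivity)]
      have h1 : (m:ℝ) * W ≤ j := by exact_mod_cast (by omega : m * W ≤ j)
      nlinarith [pow_pos (show (0:ℝ) < 2 by norm_num) n]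
    · rw [div_le_div_iff₀ (by positivity) (by positivity)]
      have h1 : (j:ℝ) ≤ ((m:ℝ) + 1) * W := by exact_mod_cast (by omega : j ≤ (m + 1) * W)
      nlinarith [pow_pos (show (0:ℝ) < 2 by norm_num) n]
  have hlow : ((∑ j ∈ Finset.Ico (m * W + 1) ((m + 1) * W), stern (2 ^ k + j) : ℕ) : ℝ≥0∞)
      ≤ ∑ j ∈ Finset.range (2 ^ k),
          (stern (2 ^ k + j) : ℝ≥0∞) * C.indicator 1 (((j:ℝ) / 2 ^ k : ℝ) : UnitAddCircle) := by
    rw [Nat.cast_sum]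
    refine le_trans (le_of_eq (Finset.sum_congr rfl fun j hj => ?_))
      (Finset.sum_le_sum_of_subset hsub)
    rw [hind j hj, mul_one]
  set S : ℕ := ∑ j ∈ Finset.Ico (m * W + 1) ((m + 1) * W), stern (2 ^ k + j) with hSdef
  have hS : (3:ℕ) ^ t ≤ 4 * S := interior_sum_ge n m k hk hm
  have hSr : ((3:ℝ≥0∞) ^ t) ≤ 4 * (S : ℝ≥0∞) := by exact_mod_cast hS
  calc ((4:ℝ≥0∞) * 3 ^ n)⁻¹
      = 4⁻¹ * ((3:ℝ≥0∞) ^ n)⁻¹ := by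
        rw [ENNReal.mul_inv (Or.inl (by norm_num)) (Or.inl (by norm_num))]
    _ = 4⁻¹ * (((3:ℝ≥0∞) ^ k)⁻¹ * 3 ^ t) := by
        have h := inv_pow3_mul n t
        rw [show n + t = k from by omega] at h
        rw [h]
    _ ≤ 4⁻¹ * (((3:ℝ≥0∞) ^ k)⁻¹ * (4 * S)) := by
        gcongr
    _ = ((3:ℝ≥0∞) ^ k)⁻¹ * ((4⁻¹ * 4) * S) := by ring
    _ = ((3:ℝ≥0∞) ^ k)⁻¹ * (S : ℝ≥0∞) := by
        rw [ENNReal.inv_mul_cancel (by norm_num) (by norm_num), one_mul]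
    _ ≤ _ := mul_le_mul_right hlow _

lemma mem_image_Ioo_cases {a b u : ℝ} (ha : -1 ≤ a) (hb : b ≤ 2) (hu0 : 0 ≤ u) (hu1 : u < 1)
    (h : (u : UnitAddCircle) ∈ (fun y : ℝ => (y : UnitAddCircle)) '' Set.Ioo a b) :
    (a + 1 < u ∧ u < b + 1) ∨ (a < u ∧ u < b) ∨ (a - 1 < u ∧ u < b - 1) := by
  obtain ⟨v, hv, hveq⟩ := h
  obtain ⟨ν, hν⟩ := (coe_circle_eq_iff v u).mp hveq
  simp only [zsmul_eq_mul, mul_one] at hν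
  have hv1 : a < v := hv.1
  have hv2 : v < b := hv.2
  have hν1 : (-2:ℝ) < (ν:ℝ) := by linarith
  have hν2 : (ν:ℝ) < 2 := by linarith
  have hνa : (-2:ℤ) < ν := by exact_mod_cast hν1
  have hνb : ν < 2 := by exact_mod_cast hν2
  interval_cases ν <;> simp only [Int.cast_neg, Int.cast_one, Int.cast_zero] at hν
  · left; constructor <;> linarith
  · right; left; constructor <;> linarith
  · right; right; constructor <;> linarith

lemma sum_if_window_le (k nn : ℕ) (hk : nn ≤ k) (a b : ℝ) (ha : a ≤ 3)
    (hab : b - a ≤ ((2:ℝ) ^ nn)⁻¹) :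
    ∑ j ∈ Finset.range (2 ^ k),
        (if a < (j:ℝ) / 2 ^ k ∧ (j:ℝ) / 2 ^ k < b then ((stern (2 ^ k + j) : ℝ≥0∞)) else 0)
      ≤ ((2 ^ (nn + 5) * 3 ^ (k - nn) : ℕ) : ℝ≥0∞) := by
  set W := 2 ^ (k - nn) with hW
  have hWpos : 0 < W := Nat.pow_pos (by norm_num)
  set j0 := ⌈(2:ℝ) ^ k * a⌉₊ with hj0
  set m0 := j0 / W with hm0def
  have h2k : (2:ℕ) ^ nn * W = 2 ^ k := by rw [hW, ← pow_add]; congr 1; omega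
  have h2kr : (2:ℝ) ^ nn * (W:ℕ) = 2 ^ k := by exact_mod_cast congrArg (Nat.cast : ℕ → ℝ) h2k
  have h2kpos : (0:ℝ) < 2 ^ k := by positivity
  have hWin : ∀ j : ℕ, a < (j:ℝ) / 2 ^ k → (j:ℝ) / 2 ^ k < b →
      j ∈ Finset.Ico (m0 * W) ((m0 + 2) * W) := by
    intro j h1 h2
    have hja : (2:ℝ) ^ k * a ≤ j := by
      rw [lt_div_iff₀ h2kpos] at h1
      linarith [mul_comm a ((2:ℝ)^k)]
    have hj0le : j0 ≤ j := Nat.ceil_le.mpr hja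
    have hjb : (j:ℝ) < 2 ^ k * a + W := by
      rw [div_lt_iff₀ h2kpos] at h2
      have hWr : (2:ℝ)^k * ((2:ℝ)^nn)⁻¹ = (W:ℕ) := by
        field_simp
        linarith [h2kr]
      nlinarith [pow_pos (show (0:ℝ) < 2 by norm_num) k]
    have hjb2 : (j:ℝ) < (j0:ℕ) + (W:ℕ) := by
      have := Nat.le_ceil ((2:ℝ) ^ k * a)
      push_cast
      push_cast at this
      linarith
    have hjb3 : j < j0 + W := by exact_mod_cast hjb2
    have hdm := Nat.div_add_mod j0 W
    have hmod := Nat.mod_lt j0 hWpos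
    have e1 : m0 * W = W * (j0 / W) := by rw [hm0def, mul_comm]
    have e2 : (m0 + 2) * W = W * (j0 / W) + 2 * W := by rw [hm0def]; ring
    rw [Finset.mem_Ico]
    omega
  have hstep : ∑ j ∈ Finset.range (2 ^ k),
        (if a < (j:ℝ) / 2 ^ k ∧ (j:ℝ) / 2 ^ k < b then ((stern (2 ^ k + j) : ℝ≥0∞)) else 0)
      ≤ ∑ j ∈ Finset.range (2 ^ k),
        (if j ∈ Finset.Ico (m0 * W) ((m0 + 2) * W) then ((stern (2 ^ k + j) : ℝ≥0∞)) else 0) := by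
    refine Finset.sum_le_sum fun j _ => ?_
    by_cases hc : a < (j:ℝ) / 2 ^ k ∧ (j:ℝ) / 2 ^ k < b
    · rw [if_pos hc, if_pos (hWin j hc.1 hc.2)]
    · rw [if_neg hc]; exact zero_le
  refine hstep.trans ?_
  rw [Finset.sum_ite_mem]
  refine le_trans (Finset.sum_le_sum_of_subset (Finset.inter_subset_right)) ?_
  have hcast : ∑ j ∈ Finset.Ico (m0 * W) ((m0 + 2) * W), ((stern (2 ^ k + j) : ℝ≥0∞))
      = ((∑ j ∈ Finset.Ico (m0 * W) ((m0 + 2) * W), stern (2 ^ k + j) : ℕ) : ℝ≥0∞) := by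
    push_cast [Nat.cast_sum]; rfl
  rw [hcast]
  have hm0 : m0 ≤ 2 ^ (nn + 2) := by
    have hja : (2:ℝ) ^ k * a ≤ ((3 * 2 ^ k : ℕ) : ℝ) := by
      push_cast
      nlinarith
    have hj0le : j0 ≤ 3 * 2 ^ k := Nat.ceil_le.mpr hja
    have h1 : j0 ≤ W * 2 ^ (nn + 2) := by
      have : W * 2 ^ (nn + 2) = 4 * 2 ^ k := by
        calc W * 2 ^ (nn + 2) = 4 * (2 ^ nn * W) := by ring
        _ = 4 * 2 ^ k := by rw [h2k]
      omega
    calc m0 = j0 / W := hm0def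
    _ ≤ W * 2 ^ (nn + 2) / W := Nat.div_le_div_right h1
    _ = 2 ^ (nn + 2) := Nat.mul_div_cancel_left _ hWpos
  exact_mod_cast sum_two_windows_le k nn m0 hk hm0

lemma sternMeasure_open_le (nn k : ℕ) (hk : nn ≤ k) (a b : ℝ)
    (ha : -1 ≤ a) (ha3 : a ≤ 2) (hb : b ≤ 2) (hab : b - a ≤ ((2:ℝ) ^ nn)⁻¹) :
    sternMeasure k ((fun y : ℝ => (y : UnitAddCircle)) '' Set.Ioo a b)
      ≤ (2:ℝ≥0∞) ^ (nn + 7) * ((3:ℝ≥0∞) ^ nn)⁻¹ := by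
  set G := (fun y : ℝ => (y : UnitAddCircle)) '' Set.Ioo a b with hGdef
  have hG : MeasurableSet G := (QuotientAddGroup.isOpenMap_coe _ isOpen_Ioo).measurableSet
  rw [sternMeasure_apply _ _ hG]
  have key : ∑ j ∈ Finset.range (2 ^ k),
      (stern (2 ^ k + j) : ℝ≥0∞) * G.indicator 1 (((j:ℝ) / 2 ^ k : ℝ) : UnitAddCircle)
      ≤ 3 * ((2 ^ (nn + 5) * 3 ^ (k - nn) : ℕ) : ℝ≥0∞) := by
    have hpt : ∀ j ∈ Finset.range (2 ^ k),
        (stern (2 ^ k + j) : ℝ≥0∞) * G.indicator 1 (((j:ℝ) / 2 ^ k : ℝ) : UnitAddCircle)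
        ≤ (if a + 1 < (j:ℝ) / 2 ^ k ∧ (j:ℝ) / 2 ^ k < b + 1 then ((stern (2 ^ k + j) : ℝ≥0∞)) else 0)
          + (if a < (j:ℝ) / 2 ^ k ∧ (j:ℝ) / 2 ^ k < b then ((stern (2 ^ k + j) : ℝ≥0∞)) else 0)
          + (if a - 1 < (j:ℝ) / 2 ^ k ∧ (j:ℝ) / 2 ^ k < b - 1 then ((stern (2 ^ k + j) : ℝ≥0∞)) else 0) := by
      intro j hj
      rw [Finset.mem_range] at hj
      by_cases hmem : (((j:ℝ) / 2 ^ k : ℝ) : UnitAddCircle) ∈ G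
      · rw [Set.indicator_of_mem hmem, Pi.one_apply, mul_one]
        have hu0 : (0:ℝ) ≤ (j:ℝ) / 2 ^ k := by positivity
        have hu1 : (j:ℝ) / 2 ^ k < 1 := by
          rw [div_lt_one (by positivity)]
          exact_mod_cast hj
        rcases mem_image_Ioo_cases ha hb hu0 hu1 hmem with h | h | h
        · rw [if_pos h]
          exact le_add_of_le_of_nonneg (le_add_of_le_of_nonneg le_rfl zero_le) zero_le
        · rw [if_pos h]
          exact le_add_of_le_of_nonneg (le_add_of_nonneg_of_le zero_le le_rfl) zero_le
        · rw [if_pos h]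
          exact le_add_of_nonneg_of_le zero_le le_rfl
      · rw [Set.indicator_of_notMem hmem, mul_zero]
        exact zero_le
    refine le_trans (Finset.sum_le_sum hpt) ?_
    rw [Finset.sum_add_distrib, Finset.sum_add_distrib]
    have w1 := sum_if_window_le k nn hk (a + 1) (b + 1) (by linarith) (by linarith)
    have w2 := sum_if_window_le k nn hk a b (by linarith) hab
    have w3 := sum_if_window_le k nn hk (a - 1) (b - 1) (by linarith) (by linarith)
    calc _ ≤ ((2 ^ (nn + 5) * 3 ^ (k - nn) : ℕ) : ℝ≥0∞)
            + ((2 ^ (nn + 5) * 3 ^ (k - nn) : ℕ) : ℝ≥0∞)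
            + ((2 ^ (nn + 5) * 3 ^ (k - nn) : ℕ) : ℝ≥0∞) := by
          gcongr
    _ = 3 * ((2 ^ (nn + 5) * 3 ^ (k - nn) : ℕ) : ℝ≥0∞) := by ring
  refine le_trans (mul_le_mul_right key _) ?_
  push_cast
  calc ((3:ℝ≥0∞) ^ k)⁻¹ * (3 * ((2:ℝ≥0∞) ^ (nn + 5) * (3:ℝ≥0∞) ^ (k - nn)))
      = (3 * 2 ^ (nn + 5)) * (((3:ℝ≥0∞) ^ k)⁻¹ * 3 ^ (k - nn)) := by ring
    _ = (3 * 2 ^ (nn + 5)) * ((3:ℝ≥0∞) ^ nn)⁻¹ := by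
        have h := inv_pow3_mul nn (k - nn)
        rw [show nn + (k - nn) = k from by omega] at h
        rw [h]
    _ ≤ (2:ℝ≥0∞) ^ (nn + 7) * ((3:ℝ≥0∞) ^ nn)⁻¹ := by
        gcongr
        calc (3:ℝ≥0∞) * 2 ^ (nn + 5) ≤ 4 * 2 ^ (nn + 5) := by gcongr <;> norm_num
        _ = 2 ^ (nn + 7) := by rw [show (4:ℝ≥0∞) = 2 ^ 2 from by norm_num, ← pow_add]; congr 1; omega
/-- The distribution function F(x) = μ([0,x]) of the weak limit μ is continuous and strictly
increasing on [0,1]. -/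
theorem sternLimit_distribution_strictMono (μ : Measure UnitAddCircle)
    (hμ : IsProbabilityMeasure μ)
    (hlim : ∀ f : C(UnitAddCircle, ℝ),
      Tendsto (fun n => ∫ x, f x ∂(sternMeasure n)) atTop (𝓝 (∫ x, f x ∂μ)))
    (F : ℝ → ℝ)
    (hF : ∀ x : ℝ, F x =
      (μ ((fun y : ℝ => (y : UnitAddCircle)) '' Set.Icc (0 : ℝ) x)).toReal) :
    ContinuousOn F (Set.Icc (0 : ℝ) 1) ∧ StrictMonoOn F (Set.Icc (0 : ℝ) 1) := by
  classical
  haveI := hμ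
  set Φ : ℝ → UnitAddCircle := fun y : ℝ => (y : UnitAddCircle) with hΦ
  set Pk : ℕ → ProbabilityMeasure UnitAddCircle :=
    fun k => ⟨sternMeasure k, sternMeasure_prob k⟩ with hPk
  set Q : ProbabilityMeasure UnitAddCircle := ⟨μ, hμ⟩ with hQ
  have htend : Tendsto Pk atTop (𝓝 Q) := by
    rw [ProbabilityMeasure.tendsto_iff_forall_integral_tendsto]
    intro f
    exact hlim f.toContinuousMap
  -- upper bound on measure of short closed arcs
  have key_upper : ∀ n : ℕ, ∀ x y : ℝ, 0 ≤ x → x ≤ 1 → y ≤ 1 →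
      y - x ≤ ((2:ℝ) ^ (n + 2))⁻¹ →
      μ (Φ '' Set.Icc x y) ≤ (2:ℝ≥0∞) ^ (n + 7) * ((3:ℝ≥0∞) ^ n)⁻¹ := by
    intro n x y hx hx1 hy hyx
    set δ : ℝ := ((2:ℝ) ^ (n + 2))⁻¹ with hδ
    have hδpos : 0 < δ := by positivity
    have hδ1 : δ ≤ 1 := by
      rw [hδ]
      rw [inv_le_one_iff₀]
      right
      exact one_le_pow₀ (by norm_num)
    set a : ℝ := x - δ with ha
    set b : ℝ := y + δ with hb
    have hsub : Φ '' Set.Icc x y ⊆ Φ '' Set.Ioo a b := by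
      apply Set.image_mono
      intro z hz
      exact ⟨by simp only [ha]; linarith [hz.1], by simp only [hb]; linarith [hz.2]⟩
    have hOd : ∀ k, n ≤ k →
        sternMeasure k (Φ '' Set.Ioo a b) ≤ (2:ℝ≥0∞) ^ (n + 7) * ((3:ℝ≥0∞) ^ n)⁻¹ := by
      intro k hk
      apply sternMeasure_open_le n k hk a b
      · simp only [ha]; linarith
      · simp only [ha]; linarith
      · simp only [hb]; linarith
      · have h1 : b - a = (y - x) + 2 * δ := by simp only [ha, hb]; ring
        have h2 : (3:ℝ) * ((2:ℝ) ^ (n + 2))⁻¹ ≤ ((2:ℝ) ^ n)⁻¹ := by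
          rw [pow_add]
          rw [mul_inv]
          have : ((2:ℝ) ^ 2)⁻¹ = 1 / 4 := by norm_num
          rw [this]
          have hp : (0:ℝ) < ((2:ℝ) ^ n)⁻¹ := by positivity
          nlinarith
        rw [h1, hδ]
        linarith
    have hliminf : (Q : Measure UnitAddCircle) (Φ '' Set.Ioo a b)
        ≤ atTop.liminf fun k => (Pk k : Measure UnitAddCircle) (Φ '' Set.Ioo a b) :=
      ProbabilityMeasure.le_liminf_measure_open_of_tendsto htend
        (QuotientAddGroup.isOpenMap_coe _ isOpen_Ioo)
    have hbd : (atTop.liminf fun k => (Pk k : Measure UnitAddCircle) (Φ '' Set.Ioo a b))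
        ≤ (2:ℝ≥0∞) ^ (n + 7) * ((3:ℝ≥0∞) ^ n)⁻¹ := by
      exact Filter.liminf_le_of_frequently_le
        ((Filter.eventually_atTop.mpr ⟨n, hOd⟩).frequently)
    calc μ (Φ '' Set.Icc x y) ≤ μ (Φ '' Set.Ioo a b) := measure_mono hsub
    _ = (Q : Measure UnitAddCircle) (Φ '' Set.Ioo a b) := rfl
    _ ≤ _ := le_trans hliminf hbd
  -- lower bound on measure of dyadic closed arcs
  have key_lower : ∀ n m : ℕ, m + 1 ≤ 2 ^ n →
      ((4:ℝ≥0∞) * 3 ^ n)⁻¹ ≤ μ (Φ '' Set.Icc ((m:ℝ) / 2 ^ n) (((m:ℝ) + 1) / 2 ^ n)) := by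
    intro n m hm
    have hclosed : IsClosed (Φ '' Set.Icc ((m:ℝ) / 2 ^ n) (((m:ℝ) + 1) / 2 ^ n)) :=
      (isCompact_Icc.image (AddCircle.continuous_mk' 1)).isClosed
    have hlimsup := ProbabilityMeasure.limsup_measure_closed_le_of_tendsto htend hclosed
    refine le_trans ?_ hlimsup
    exact Filter.le_limsup_of_frequently_le
      ((Filter.eventually_atTop.mpr
        ⟨2 * n + 3, fun k hk => sternMeasure_closed_ge n m k hm hk⟩).frequently)
  -- monotonicity of F
  have hmono : ∀ u v : ℝ, u ≤ v → F u ≤ F v := by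
    intro u v huv
    rw [hF u, hF v]
    exact ENNReal.toReal_mono (measure_ne_top μ _)
      (measure_mono (Set.image_mono (Set.Icc_subset_Icc_right huv)))
  -- the subadditivity estimate
  have hsplit : ∀ u v : ℝ, 0 ≤ u → u ≤ v →
      μ (Φ '' Set.Icc 0 v) ≤ μ (Φ '' Set.Icc 0 u) + μ (Φ '' Set.Icc u v) := by
    intro u v hu huv
    have : Φ '' Set.Icc 0 v ⊆ (Φ '' Set.Icc 0 u) ∪ (Φ '' Set.Icc u v) := by
      rw [← Set.image_union]
      apply Set.image_mono
      intro z hz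
      rcases le_total z u with h | h
      · exact Or.inl ⟨hz.1, h⟩
      · exact Or.inr ⟨h, hz.2⟩
    exact le_trans (measure_mono this) (measure_union_le _ _)
  constructor
  · -- continuity
    rw [Metric.continuousOn_iff]
    intro x hx ε hε
    -- choose n
    have htend0 : Tendsto (fun n : ℕ => (128:ℝ) * (2/3) ^ n) atTop (𝓝 0) := by
      have := tendsto_pow_atTop_nhds_zero_of_lt_one
        (show (0:ℝ) ≤ 2/3 by norm_num) (show (2:ℝ)/3 < 1 by norm_num)
      simpa using this.const_mul (128:ℝ)
    obtain ⟨n, hn⟩ := (htend0.eventually (eventually_lt_nhds hε)).exists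
    have hBtoReal : ((2:ℝ≥0∞) ^ (n + 7) * ((3:ℝ≥0∞) ^ n)⁻¹).toReal = 128 * (2/3) ^ n := by
      rw [ENNReal.toReal_mul, ENNReal.toReal_inv, ENNReal.toReal_pow, ENNReal.toReal_pow]
      simp only [ENNReal.toReal_ofNat]
      rw [div_pow]
      rw [pow_add]
      field_simp
      ring
    have hBne : (2:ℝ≥0∞) ^ (n + 7) * ((3:ℝ≥0∞) ^ n)⁻¹ ≠ ⊤ :=
      ENNReal.mul_ne_top (ENNReal.pow_ne_top (by norm_num))
        (ENNReal.inv_ne_top.mpr (pow_ne_zero _ (by norm_num)))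
    set δ : ℝ := ((2:ℝ) ^ (n + 2))⁻¹ with hδ
    have hδpos : 0 < δ := by positivity
    refine ⟨δ, hδpos, fun z hz hdist => ?_⟩
    -- estimate |F z - F x|
    have hest : ∀ u v : ℝ, u ∈ Set.Icc (0:ℝ) 1 → v ∈ Set.Icc (0:ℝ) 1 → u ≤ v → v - u ≤ δ →
        F v - F u ≤ 128 * (2/3) ^ n := by
      intro u v hu hv huv hd
      have h1 := hsplit u v hu.1 huv
      have h2 := key_upper n u v hu.1 hu.2 hv.2 hd
      rw [hF u, hF v]
      have h3 : μ (Φ '' Set.Icc 0 v) ≤ μ (Φ '' Set.Icc 0 u)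
          + (2:ℝ≥0∞) ^ (n + 7) * ((3:ℝ≥0∞) ^ n)⁻¹ := le_trans h1 (add_le_add_right h2 _)
      have h4 := ENNReal.toReal_mono (by
          exact ENNReal.add_ne_top.mpr ⟨measure_ne_top μ _, hBne⟩) h3
      rw [ENNReal.toReal_add (measure_ne_top μ _) hBne, hBtoReal] at h4
      linarith
    rw [Real.dist_eq] at hdist
    rw [Real.dist_eq]
    rcases le_total z x with h | h
    · have := hest z x hz hx h (by rw [abs_sub_comm] at hdist; rw [abs_of_nonneg (by linarith)] at hdist; linarith)
      have hle := hmono z x h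
      rw [abs_of_nonpos (by linarith)]
      linarith
    · have := hest x z hx hz h (by rw [abs_of_nonneg (by linarith)] at hdist; linarith)
      have hle := hmono x z h
      rw [abs_of_nonneg (by linarith)]
      linarith
  · -- strict monotonicity
    intro x hx y hy hxy
    -- choose n with 4 / 2^n < y - x
    obtain ⟨n, hn⟩ := pow_unbounded_of_one_lt (4 / (y - x)) (show (1:ℝ) < 2 by norm_num)
    have hyx : 0 < y - x := by linarith
    have h2n : (0:ℝ) < 2 ^ n := by positivity
    have h4 : 4 / (2:ℝ) ^ n < y - x := by
      rw [div_lt_iff₀ h2n]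
      rw [div_lt_iff₀ hyx] at hn
      nlinarith
    set m : ℕ := ⌈(2:ℝ) ^ n * x⌉₊ + 1 with hm
    set a : ℝ := (m:ℝ) / 2 ^ n with ha
    set b : ℝ := ((m:ℝ) + 1) / 2 ^ n with hb
    have hceil_ge : (2:ℝ) ^ n * x ≤ ⌈(2:ℝ) ^ n * x⌉₊ := Nat.le_ceil _
    have hceil_lt : (⌈(2:ℝ) ^ n * x⌉₊ : ℝ) < 2 ^ n * x + 1 :=
      Nat.ceil_lt_add_one (mul_nonneg (by positivity) hx.1)
    have hma : (2:ℝ) ^ n * x < m := by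
      rw [hm]; push_cast; linarith
    have hmb : (m:ℝ) < 2 ^ n * x + 2 := by
      rw [hm]; push_cast; linarith
    have hxa : x < a := by
      rw [ha, lt_div_iff₀ h2n]
      nlinarith [hma]
    have hby : b < y := by
      rw [hb, div_lt_iff₀ h2n]
      have h5 := (div_lt_iff₀ h2n).mp h4
      nlinarith [hmb, h5]
    have hb1 : b < 1 := by
      have : y ≤ 1 := hy.2
      linarith
    have hmn : m + 1 ≤ 2 ^ n := by
      have hblt : ((m:ℝ) + 1) < 2 ^ n := by
        rw [hb, div_lt_one h2n] at hb1
        exact hb1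
      have h2 : (((m + 1) : ℕ) : ℝ) < ((2 ^ n : ℕ) : ℝ) := by
        push_cast
        push_cast at hblt
        linarith
      exact (Nat.cast_lt.mp h2).le
    set C : Set UnitAddCircle := Φ '' Set.Icc a b with hC
    have hCmeas : MeasurableSet C :=
      ((isCompact_Icc.image (AddCircle.continuous_mk' 1)).isClosed).measurableSet
    have hCge : ((4:ℝ≥0∞) * 3 ^ n)⁻¹ ≤ μ C := key_lower n m hmn
    have hdisj : Disjoint (Φ '' Set.Icc 0 x) C := by
      rw [Set.disjoint_left]
      rintro z ⟨u, hu, huz⟩ ⟨v, hv, hvz⟩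
      have heq : Φ v = Φ u := by rw [hvz, huz]
      obtain ⟨ν, hν⟩ := (coe_circle_eq_iff v u).mp heq
      simp only [zsmul_eq_mul, mul_one] at hν
      have h1 : 0 < v - u := by
        have : u ≤ x := hu.2
        have : a ≤ v := hv.1
        linarith
      have h2 : v - u < 1 := by
        have hv2 : v ≤ b := hv.2
        have hu1 : 0 ≤ u := hu.1
        linarith
      have hν1 : (0:ℝ) < (ν:ℝ) := by linarith
      have hν2 : (ν:ℝ) < 1 := by linarith
      have : (0:ℤ) < ν := by exact_mod_cast hν1
      have : ν < 1 := by exact_mod_cast hν2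
      omega
    have hunion : (Φ '' Set.Icc 0 x) ∪ C ⊆ Φ '' Set.Icc 0 y := by
      rw [← Set.image_union]
      apply Set.image_mono
      intro z hz
      rcases hz with hz | hz
      · exact ⟨hz.1, le_trans hz.2 (le_of_lt hxy)⟩
      · refine ⟨?_, ?_⟩
        · have := hz.1
          have hx0 : 0 ≤ x := hx.1
          linarith [hxa]
        · exact le_trans hz.2 (le_of_lt hby)
    have hadd : μ (Φ '' Set.Icc 0 x) + μ C ≤ μ (Φ '' Set.Icc 0 y) := by
      rw [← measure_union hdisj hCmeas]
      exact measure_mono hunion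
    have hlt : μ (Φ '' Set.Icc 0 x) < μ (Φ '' Set.Icc 0 y) := by
      have hc0 : ((4:ℝ≥0∞) * 3 ^ n)⁻¹ ≠ 0 :=
        ENNReal.inv_ne_zero.mpr (ENNReal.mul_ne_top (by norm_num) (ENNReal.pow_ne_top (by norm_num)))
      calc μ (Φ '' Set.Icc 0 x) < μ (Φ '' Set.Icc 0 x) + ((4:ℝ≥0∞) * 3 ^ n)⁻¹ :=
            ENNReal.lt_add_right (measure_ne_top μ _) hc0
      _ ≤ μ (Φ '' Set.Icc 0 x) + μ C := add_le_add_right hCge _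
      _ ≤ _ := hadd
    rw [hF x, hF y]
    exact ENNReal.toReal_lt_toReal (measure_ne_top μ _) (measure_ne_top μ _) |>.mpr hlt
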